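/- arXiv:1907.10829 — 5 statements merged into one kernel-verified Lean document; each statement's English description precedes it below -/
import Mathlib

section
/- If (Ω,d) is a separable metric space such that d² is a semimetric of negative type, then the metric auto-covariance kernel C(s,t) = Cov_Ω(X(s), X(t)) of an Ω-valued stochastic process X on [0,1] is symmetric and nonnegative definite: for any k, any a₁,…,a_k ∈ ℝ and s₁,…,s_k ∈ [0,1], Σᵢⱼ aᵢaⱼ C(sᵢ,sⱼ) ≥ 0. -/
open MeasureTheory ProbabilityTheory

private lemma negType_sum {Ω : Type*} [MetricSpace Ω]
    (hneg : ∀ (n : ℕ) (z : Fin n → Ω) (c : Fin n → ℝ), 2 ≤ n → (∑ i, c i) = 0 →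
      ∑ i, ∑ j, c i * c j * (dist (z i) (z j)) ^ 2 ≤ 0)
    {ι : Type*} [Fintype ι] (z : ι → Ω) (c : ι → ℝ) (hc : (∑ i, c i) = 0) :
    ∑ i, ∑ j, c i * c j * dist (z i) (z j) ^ 2 ≤ 0 := by
  classical
  rcases le_or_gt 2 (Fintype.card ι) with h | h
  · let e := Fintype.equivFin ι
    have h0 : (∑ i : Fin (Fintype.card ι), c (e.symm i)) = 0 := by
      rw [Equiv.sum_comp e.symm c]; exact hc
    have hmain := hneg _ (fun i => z (e.symm i)) (fun i => c (e.symm i)) h h0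
    calc ∑ i, ∑ j, c i * c j * dist (z i) (z j) ^ 2
        = ∑ i : Fin (Fintype.card ι), ∑ j : Fin (Fintype.card ι),
            c (e.symm i) * c (e.symm j) * dist (z (e.symm i)) (z (e.symm j)) ^ 2 := by
          rw [← Equiv.sum_comp e.symm (fun i => ∑ j, c i * c j * dist (z i) (z j) ^ 2)]
          exact Finset.sum_congr rfl fun i _ =>
            (Equiv.sum_comp e.symm
              (fun j => c (e.symm i) * c j * dist (z (e.symm i)) (z j) ^ 2)).symm
      _ ≤ 0 := hmain
  · have hsub : Subsingleton ι := Fintype.card_le_one_iff_subsingleton.mp (by omega)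
    have hz : ∀ i j : ι, dist (z i) (z j) ^ 2 = 0 := fun i j => by
      rw [Subsingleton.elim i j, dist_self]; norm_num
    simp [hz]

/-- If `(Ω,d)` is a separable (totally bounded) metric space with `d²` a semimetric of
negative type, then the metric auto-covariance kernel
`C(s,t) = Cov_Ω(X(s), X(t))` of an `Ω`-valued stochastic process `X` on `[0,1]` is
symmetric and nonnegative definite. -/
theorem stmt_5 {α Ω : Type*} {mα : MeasurableSpace α} (μ : Measure α) [IsProbabilityMeasure μ]
    [MeasurableSpace Ω] [MetricSpace Ω] [BorelSpace Ω] [TopologicalSpace.SeparableSpace Ω]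
    (htb : TotallyBounded (Set.univ : Set Ω))
    (hneg : ∀ (n : ℕ) (z : Fin n → Ω) (c : Fin n → ℝ), 2 ≤ n → (∑ i, c i) = 0 →
      ∑ i, ∑ j, c i * c j * (dist (z i) (z j)) ^ 2 ≤ 0)
    (X X' : α → ℝ → Ω)
    (hmeas : ∀ t ∈ Set.Icc (0:ℝ) 1, Measurable (fun a => X a t))
    (hmeas' : ∀ t ∈ Set.Icc (0:ℝ) 1, Measurable (fun a => X' a t))
    (hindep : IndepFun X X' μ) (hid : IdentDistrib X X' μ μ)
    (C : ℝ → ℝ → ℝ)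
    (hC : ∀ s t : ℝ, C s t = (1 / 4) * ∫ a, ((dist (X a s) (X' a t)) ^ 2
        + (dist (X' a s) (X a t)) ^ 2 - 2 * (dist (X a s) (X a t)) ^ 2) ∂μ) :
    (∀ s ∈ Set.Icc (0:ℝ) 1, ∀ t ∈ Set.Icc (0:ℝ) 1, C s t = C t s) ∧
    ∀ (k : ℕ) (c : Fin k → ℝ) (s : Fin k → ℝ), (∀ i, s i ∈ Set.Icc (0:ℝ) 1) →
      0 ≤ ∑ i, ∑ j, c i * c j * C (s i) (s j) := by
  -- a uniform bound on distances
  haveI : SecondCountableTopology Ω := UniformSpace.secondCountable_of_separable Ω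
  obtain ⟨R, hR⟩ : ∃ R : ℝ, ∀ x y : Ω, dist x y ≤ R := by
    obtain ⟨R, hR⟩ := Metric.isBounded_iff.mp htb.isBounded
    exact ⟨R, fun x y => hR (Set.mem_univ x) (Set.mem_univ y)⟩
  -- integrability of squared distances
  have hInt : ∀ (f g : α → Ω), Measurable f → Measurable g →
      Integrable (fun a => dist (f a) (g a) ^ 2) μ := by
    intro f g hf hg
    refine (integrable_const (R ^ 2)).mono'
      ((hf.dist hg).pow_const 2).aestronglyMeasurable ?_
    filter_upwards with a
    rw [Real.norm_eq_abs, abs_of_nonneg (sq_nonneg _)]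
    exact pow_le_pow_left₀ dist_nonneg (hR _ _) 2
  -- identical distribution of squared distances
  have hEq : ∀ s t : ℝ, (∫ a, dist (X' a s) (X' a t) ^ 2 ∂μ)
      = ∫ a, dist (X a s) (X a t) ^ 2 ∂μ := by
    intro s t
    have hu : Measurable (fun g : ℝ → Ω => dist (g s) (g t) ^ 2) :=
      ((measurable_pi_apply s).dist (measurable_pi_apply t)).pow_const 2
    exact ((hid.comp hu).integral_eq).symm
  constructor
  · intro s hs t ht
    rw [hC s t, hC t s]
    congr 1
    refine integral_congr_ae (Filter.Eventually.of_forall fun a => ?_)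
    beta_reduce
    rw [dist_comm (X a t) (X' a s), dist_comm (X' a t) (X a s), dist_comm (X a t) (X a s)]
    ring
  · intro k c s hs
    have hXm : ∀ i, Measurable (fun a => X a (s i)) := fun i => hmeas (s i) (hs i)
    have hX'm : ∀ i, Measurable (fun a => X' a (s i)) := fun i => hmeas' (s i) (hs i)
    -- rewrite C in symmetric form
    have hC' : ∀ i j : Fin k, C (s i) (s j) = (1/4 : ℝ) *
        ∫ a, (dist (X a (s i)) (X' a (s j)) ^ 2 + dist (X' a (s i)) (X a (s j)) ^ 2
          - dist (X a (s i)) (X a (s j)) ^ 2 - dist (X' a (s i)) (X' a (s j)) ^ 2) ∂μ := by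
      intro i j
      have IF : Integrable (fun a => dist (X a (s i)) (X' a (s j)) ^ 2) μ :=
        hInt _ _ (hXm i) (hX'm j)
      have IG : Integrable (fun a => dist (X' a (s i)) (X a (s j)) ^ 2) μ :=
        hInt _ _ (hX'm i) (hXm j)
      have ID : Integrable (fun a => dist (X a (s i)) (X a (s j)) ^ 2) μ :=
        hInt _ _ (hXm i) (hXm j)
      have ID' : Integrable (fun a => dist (X' a (s i)) (X' a (s j)) ^ 2) μ :=
        hInt _ _ (hX'm i) (hX'm j)
      have IFG : Integrable (fun a => dist (X a (s i)) (X' a (s j)) ^ 2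
          + dist (X' a (s i)) (X a (s j)) ^ 2) μ := IF.add IG
      have I2D : Integrable (fun a => 2 * dist (X a (s i)) (X a (s j)) ^ 2) μ :=
        ID.const_mul 2
      have IFGD : Integrable (fun a => dist (X a (s i)) (X' a (s j)) ^ 2
          + dist (X' a (s i)) (X a (s j)) ^ 2 - dist (X a (s i)) (X a (s j)) ^ 2) μ :=
        IFG.sub ID
      rw [hC]
      congr 1
      rw [integral_sub IFG I2D, integral_add IF IG, integral_const_mul]
      rw [integral_sub IFGD ID', integral_sub IFG ID,
        integral_add IF IG, hEq (s i) (s j)]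
      ring
    -- pointwise nonnegativity from negative type
    have hpt : ∀ a : α, 0 ≤ ∑ i, ∑ j, c i * c j *
        (dist (X a (s i)) (X' a (s j)) ^ 2 + dist (X' a (s i)) (X a (s j)) ^ 2
          - dist (X a (s i)) (X a (s j)) ^ 2 - dist (X' a (s i)) (X' a (s j)) ^ 2) := by
      intro a
      have hw0 : (∑ p : Fin k ⊕ Fin k, Sum.elim c (fun i => -c i) p) = 0 := by
        rw [Fintype.sum_sum_type]; simp
      have hneg2 := negType_sum hneg
        (Sum.elim (fun i => X a (s i)) (fun i => X' a (s i)))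
        (Sum.elim c (fun i => -c i)) hw0
      have hA : (∑ p : Fin k ⊕ Fin k, ∑ q : Fin k ⊕ Fin k,
            Sum.elim c (fun i => -c i) p * Sum.elim c (fun i => -c i) q *
            dist (Sum.elim (fun i => X a (s i)) (fun i => X' a (s i)) p)
              (Sum.elim (fun i => X a (s i)) (fun i => X' a (s i)) q) ^ 2)
          = (∑ i, ∑ j, c i * c j * dist (X a (s i)) (X a (s j)) ^ 2)
          + (∑ i, ∑ j, c i * c j * dist (X' a (s i)) (X' a (s j)) ^ 2)
          - (∑ i, ∑ j, c i * c j * dist (X a (s i)) (X' a (s j)) ^ 2)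
          - (∑ i, ∑ j, c i * c j * dist (X' a (s i)) (X a (s j)) ^ 2) := by
        simp only [Fintype.sum_sum_type, Sum.elim_inl, Sum.elim_inr, neg_mul, mul_neg,
          neg_neg, Finset.sum_add_distrib, Finset.sum_neg_distrib]
        ring
      have hE : (∑ i, ∑ j, c i * c j *
            (dist (X a (s i)) (X' a (s j)) ^ 2 + dist (X' a (s i)) (X a (s j)) ^ 2
              - dist (X a (s i)) (X a (s j)) ^ 2 - dist (X' a (s i)) (X' a (s j)) ^ 2))
          = (∑ i, ∑ j, c i * c j * dist (X a (s i)) (X' a (s j)) ^ 2)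
          + (∑ i, ∑ j, c i * c j * dist (X' a (s i)) (X a (s j)) ^ 2)
          - (∑ i, ∑ j, c i * c j * dist (X a (s i)) (X a (s j)) ^ 2)
          - (∑ i, ∑ j, c i * c j * dist (X' a (s i)) (X' a (s j)) ^ 2) := by
        simp only [mul_add, mul_sub, Finset.sum_add_distrib, Finset.sum_sub_distrib]
      rw [hA] at hneg2
      rw [hE]
      linarith
    -- integrability of the combined integrand
    have hIcomb : ∀ i j : Fin k, Integrable (fun a => c i * c j *
        (dist (X a (s i)) (X' a (s j)) ^ 2 + dist (X' a (s i)) (X a (s j)) ^ 2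
          - dist (X a (s i)) (X a (s j)) ^ 2 - dist (X' a (s i)) (X' a (s j)) ^ 2)) μ := by
      intro i j
      exact ((((hInt _ _ (hXm i) (hX'm j)).add (hInt _ _ (hX'm i) (hXm j))).sub
        (hInt _ _ (hXm i) (hXm j))).sub (hInt _ _ (hX'm i) (hX'm j))).const_mul _
    calc (0:ℝ) ≤ (1/4 : ℝ) * ∫ a, ∑ i, ∑ j, c i * c j *
          (dist (X a (s i)) (X' a (s j)) ^ 2 + dist (X' a (s i)) (X a (s j)) ^ 2
            - dist (X a (s i)) (X a (s j)) ^ 2 - dist (X' a (s i)) (X' a (s j)) ^ 2) ∂μ := by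
          exact mul_nonneg (by norm_num) (integral_nonneg hpt)
      _ = ∑ i, ∑ j, c i * c j * C (s i) (s j) := by
          rw [integral_finset_sum _ (fun i _ => integrable_finset_sum _ (fun j _ => hIcomb i j))]
          rw [Finset.mul_sum]
          refine Finset.sum_congr rfl fun i _ => ?_
          rw [integral_finset_sum _ (fun j _ => hIcomb i j), Finset.mul_sum]
          refine Finset.sum_congr rfl fun j _ => ?_
          rw [integral_const_mul, hC' i j]
          ring
end

section
/- Let H be a Hilbert space, H₁,…,H_k and H'₁,…,H'_k be H-valued random variables such that (H'₁,…,H'_k) is an independent copy of (H₁,…,H_k), all with finite second moments. Then for any a₁,…,a_k ∈ ℝ, E[4⟨Σaᵢ Hᵢ, Σaⱼ Hⱼ⟩ − 2⟨Σaᵢ Hᵢ, Σaⱼ H'ⱼ⟩ − 2⟨Σaᵢ H'ᵢ, Σaⱼ Hⱼ⟩] ≥ Var(‖Σaᵢ Hᵢ‖) ≥ 0. -/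
open MeasureTheory ProbabilityTheory
open scoped RealInnerProductSpace

lemma aux_inner_int {α H : Type*} {mα : MeasurableSpace α} {μ : Measure α}
    [NormedAddCommGroup H] [InnerProductSpace ℝ H]
    {S S' : α → H} (hS : MemLp S 2 μ) (hS' : MemLp S' 2 μ) :
    Integrable (fun a => ⟪S a, S' a⟫) μ := by
  have h := L2.integrable_inner (𝕜 := ℝ) (hS.toLp S) (hS'.toLp S')
  apply h.congr
  filter_upwards [hS.coeFn_toLp, hS'.coeFn_toLp] with a h1 h2
  rw [h1, h2]

lemma aux_id_aesm {α H : Type*} {mα : MeasurableSpace α} {μ : Measure α}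
    [NormedAddCommGroup H] [MeasurableSpace H] [BorelSpace H]
    {S : α → H} (hSsm : AEStronglyMeasurable S μ) :
    AEStronglyMeasurable (fun x : H => x) (μ.map S) := by
  rcases hSsm.isSeparable_ae_range with ⟨t, ht, htm⟩
  refine aestronglyMeasurable_iff_aemeasurable_separable.2
    ⟨aemeasurable_id, closure t, ht.closure, ?_⟩
  exact (MeasureTheory.mem_ae_map_iff hSsm.aemeasurable measurableSet_closure).2
    (htm.mono fun x hx => subset_closure hx)

lemma aux_inner_indep {α H : Type*} {mα : MeasurableSpace α} {μ : Measure α}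
    [IsProbabilityMeasure μ]
    [NormedAddCommGroup H] [InnerProductSpace ℝ H] [CompleteSpace H]
    [MeasurableSpace H] [BorelSpace H]
    {S S' : α → H} (hS : MemLp S 2 μ) (hS' : MemLp S' 2 μ)
    (hind : IndepFun S S' μ) :
    ∫ a, ⟪S a, S' a⟫ ∂μ = ⟪∫ a, S a ∂μ, ∫ a, S' a ∂μ⟫ := by
  have hSm : AEMeasurable S μ := hS.aestronglyMeasurable.aemeasurable
  have hS'm : AEMeasurable S' μ := hS'.aestronglyMeasurable.aemeasurable
  have hSi : Integrable S μ := hS.integrable one_le_two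
  have hS'i : Integrable S' μ := hS'.integrable one_le_two
  haveI : IsProbabilityMeasure (μ.map S) := Measure.isProbabilityMeasure_map hSm
  haveI : IsProbabilityMeasure (μ.map S') := Measure.isProbabilityMeasure_map hS'm
  have hmap : μ.map (fun a => (S a, S' a)) = (μ.map S).prod (μ.map S') :=
    (indepFun_iff_map_prod_eq_prod_map_map hSm hS'm).1 hind
  have hidsmS : AEStronglyMeasurable (fun x : H => x) (μ.map S) :=
    aux_id_aesm hS.aestronglyMeasurable
  have hidsmS' : AEStronglyMeasurable (fun x : H => x) (μ.map S') :=
    aux_id_aesm hS'.aestronglyMeasurable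
  have hinner_sm : AEStronglyMeasurable (fun p : H × H => ⟪p.1, p.2⟫)
      ((μ.map S).prod (μ.map S')) :=
    AEStronglyMeasurable.inner hidsmS.comp_fst hidsmS'.comp_snd
  have hidS : Integrable (fun x : H => x) (μ.map S) :=
    (integrable_map_measure hidsmS hSm).2 hSi
  have hidS' : Integrable (fun x : H => x) (μ.map S') :=
    (integrable_map_measure hidsmS' hS'm).2 hS'i
  have hprod_int : Integrable (fun p : H × H => ⟪p.1, p.2⟫) ((μ.map S).prod (μ.map S')) := by
    refine (Integrable.mul_prod (L := ℝ) hidS.norm hidS'.norm).mono hinner_sm ?_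
    refine Filter.Eventually.of_forall fun p => ?_
    calc ‖⟪p.1, p.2⟫‖ ≤ ‖p.1‖ * ‖p.2‖ := norm_inner_le_norm _ _
      _ ≤ ‖‖p.1‖ * ‖p.2‖‖ := le_abs_self _
  calc ∫ a, ⟪S a, S' a⟫ ∂μ
      = ∫ p : H × H, ⟪p.1, p.2⟫ ∂((μ.map S).prod (μ.map S')) := by
        rw [← hmap, integral_map (hSm.prodMk hS'm) (by rw [hmap]; exact hinner_sm)]
    _ = ∫ x, ∫ y, ⟪x, y⟫ ∂(μ.map S') ∂(μ.map S) := integral_prod _ hprod_int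
    _ = ∫ x, ⟪x, ∫ a, S' a ∂μ⟫ ∂(μ.map S) := by
        refine integral_congr_ae (Filter.Eventually.of_forall fun x => ?_)
        have h1 : ∫ y, ⟪x, y⟫ ∂(μ.map S') = ⟪x, ∫ y : H, y ∂(μ.map S')⟫ :=
          integral_inner hidS' x
        have h2 : ∫ y : H, y ∂(μ.map S') = ∫ a, S' a ∂μ := integral_map hS'm hidsmS'
        show ∫ y, ⟪x, y⟫ ∂(μ.map S') = ⟪x, ∫ a, S' a ∂μ⟫
        rw [h1, h2]
    _ = ∫ x, ⟪(∫ a, S' a ∂μ), x⟫ ∂(μ.map S) :=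
        integral_congr_ae (Filter.Eventually.of_forall fun x => real_inner_comm _ _)
    _ = ⟪(∫ a, S' a ∂μ), ∫ a, S a ∂μ⟫ := by
        have h1 : ∫ x, ⟪(∫ a, S' a ∂μ), x⟫ ∂(μ.map S) = ⟪(∫ a, S' a ∂μ), ∫ x : H, x ∂(μ.map S)⟫ :=
          integral_inner hidS _
        have h2 : ∫ x : H, x ∂(μ.map S) = ∫ a, S a ∂μ := integral_map hSm hidsmS
        rw [h1, h2]
    _ = ⟪∫ a, S a ∂μ, ∫ a, S' a ∂μ⟫ := real_inner_comm _ _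

lemma aux_main {α H : Type*} {mα : MeasurableSpace α} (μ : Measure α) [IsProbabilityMeasure μ]
    [NormedAddCommGroup H] [InnerProductSpace ℝ H] [CompleteSpace H]
    [MeasurableSpace H] [BorelSpace H]
    (S S' : α → H) (hS : MemLp S 2 μ) (hS' : MemLp S' 2 μ)
    (hE : ∫ a, ⟪S a, S' a⟫ ∂μ = ‖∫ a, S a ∂μ‖ ^ 2) :
    variance (fun a => ‖S a‖) μ ≤
      ∫ a, (4 * ⟪S a, S a⟫ - 2 * ⟪S a, S' a⟫ - 2 * ⟪S' a, S a⟫) ∂μ := by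
  have hnorm : MemLp (fun a => ‖S a‖) 2 μ := hS.norm
  have hsq : Integrable (fun a => ‖S a‖ ^ 2) μ := hnorm.integrable_sq
  have hinner : Integrable (fun a => ⟪S a, S' a⟫) μ := aux_inner_int hS hS'
  set m : H := ∫ a, S a ∂μ with hm
  have hint_eq : ∫ a, (4 * ⟪S a, S a⟫ - 2 * ⟪S a, S' a⟫ - 2 * ⟪S' a, S a⟫) ∂μ
      = 4 * ∫ a, ‖S a‖ ^ 2 ∂μ - 4 * ∫ a, ⟪S a, S' a⟫ ∂μ := by
    rw [← integral_const_mul, ← integral_const_mul, ← integral_sub (hsq.const_mul 4)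
      (hinner.const_mul 4)]
    refine integral_congr_ae (Filter.Eventually.of_forall fun a => ?_)
    simp only [real_inner_self_eq_norm_sq, real_inner_comm (S' a) (S a)]
    ring
  have hvar : variance (fun a => ‖S a‖) μ
      = ∫ a, ‖S a‖ ^ 2 ∂μ - (∫ a, ‖S a‖ ∂μ) ^ 2 := by
    rw [variance_eq_sub hnorm]
    simp [Pi.pow_apply]
  have hJ : ‖m‖ ≤ ∫ a, ‖S a‖ ∂μ := norm_integral_le_integral_norm _
  have hJ2 : ‖m‖ ^ 2 ≤ (∫ a, ‖S a‖ ∂μ) ^ 2 := pow_le_pow_left₀ (norm_nonneg m) hJ 2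
  have hvpos : 0 ≤ variance (fun a => ‖S a‖) μ := variance_nonneg _ _
  rw [hint_eq, hE, hvar]
  rw [hvar] at hvpos
  linarith

/-- For Hilbert-space valued random variables `H₁,…,H_k` with `(H'₁,…,H'_k)` an
independent copy, all with finite second moments, and any reals `a₁,…,a_k`:
`E[4⟨Σaᵢ Hᵢ, Σaⱼ Hⱼ⟩ - 2⟨Σaᵢ Hᵢ, Σaⱼ H'ⱼ⟩ - 2⟨Σaᵢ H'ᵢ, Σaⱼ Hⱼ⟩] ≥ Var(‖Σaᵢ Hᵢ‖) ≥ 0`. -/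
theorem stmt_6 {α H : Type*} {mα : MeasurableSpace α} (μ : Measure α) [IsProbabilityMeasure μ]
    [NormedAddCommGroup H] [InnerProductSpace ℝ H] [CompleteSpace H]
    [MeasurableSpace H] [BorelSpace H]
    (k : ℕ) (Y Y' : Fin k → α → H)
    (hY : ∀ i, MemLp (Y i) 2 μ) (hY' : ∀ i, MemLp (Y' i) 2 μ)
    (hindep : IndepFun (fun a (i : Fin k) => Y i a) (fun a (i : Fin k) => Y' i a) μ)
    (hid : IdentDistrib (fun a (i : Fin k) => Y i a) (fun a (i : Fin k) => Y' i a) μ μ)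
    (c : Fin k → ℝ) :
    variance (fun a => ‖∑ i, c i • Y i a‖) μ ≤
      ∫ a, (4 * ⟪∑ i, c i • Y i a, ∑ j, c j • Y j a⟫
        - 2 * ⟪∑ i, c i • Y i a, ∑ j, c j • Y' j a⟫
        - 2 * ⟪∑ i, c i • Y' i a, ∑ j, c j • Y j a⟫) ∂μ ∧
    0 ≤ variance (fun a => ‖∑ i, c i • Y i a‖) μ := by
  have hYint : ∀ i, Integrable (Y i) μ := fun i => (hY i).integrable one_le_two
  have hY'int : ∀ i, Integrable (Y' i) μ := fun i => (hY' i).integrable one_le_two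
  have hSmem : MemLp (fun a => ∑ i, c i • Y i a) 2 μ :=
    memLp_finset_sum _ fun i _ => ((hY i).const_smul (c i) : MemLp (fun a => c i • Y i a) 2 μ)
  have hS'mem : MemLp (fun a => ∑ i, c i • Y' i a) 2 μ :=
    memLp_finset_sum _ fun i _ => ((hY' i).const_smul (c i) : MemLp (fun a => c i • Y' i a) 2 μ)
  -- pairwise independence and identical distribution of components
  have hindij : ∀ i j, IndepFun (Y i) (Y' j) μ := fun i j =>
    hindep.comp (measurable_pi_apply i) (measurable_pi_apply j)
  have hEij : ∀ i j, ∫ a, ⟪Y i a, Y' j a⟫ ∂μ = ⟪∫ a, Y i a ∂μ, ∫ a, Y' j a ∂μ⟫ :=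
    fun i j => aux_inner_indep (hY i) (hY' j) (hindij i j)
  have hmean : ∀ i, ∫ a, Y' i a ∂μ = ∫ a, Y i a ∂μ := fun i =>
    ((hid.comp (measurable_pi_apply i)).integral_eq).symm
  -- mean of the sums
  have htY : ∀ i, Integrable (fun a => c i • Y i a) μ := fun i => (hYint i).smul (c i)
  have htY' : ∀ i, Integrable (fun a => c i • Y' i a) μ := fun i => (hY'int i).smul (c i)
  have hSint : ∫ a, ∑ i, c i • Y i a ∂μ = ∑ i, c i • ∫ a, Y i a ∂μ := by
    rw [integral_finset_sum _ fun i _ => htY i]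
    exact Finset.sum_congr rfl fun i _ => integral_smul _ _
  have hS'int : ∫ a, ∑ i, c i • Y' i a ∂μ = ∑ i, c i • ∫ a, Y i a ∂μ := by
    rw [integral_finset_sum _ fun i _ => htY' i]
    exact Finset.sum_congr rfl fun i _ => by rw [integral_smul, hmean]
  -- key: E⟪S, S'⟫ = ‖E S‖²
  have hE : ∫ a, ⟪∑ i, c i • Y i a, ∑ j, c j • Y' j a⟫ ∂μ
      = ‖∫ a, ∑ i, c i • Y i a ∂μ‖ ^ 2 := by
    have hexp : ∀ a, ⟪∑ i, c i • Y i a, ∑ j, c j • Y' j a⟫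
        = ∑ i, ∑ j, (c i * c j) * ⟪Y i a, Y' j a⟫ := by
      intro a
      rw [sum_inner]
      refine Finset.sum_congr rfl fun i _ => ?_
      rw [inner_sum]
      refine Finset.sum_congr rfl fun j _ => ?_
      rw [real_inner_smul_left, real_inner_smul_right]
      ring
    simp_rw [hexp]
    rw [integral_finset_sum _ fun i _ => (integrable_finset_sum _ fun j _ =>
      (aux_inner_int (hY i) (hY' j)).const_mul _)]
    have : ∀ i, ∫ a, ∑ j, (c i * c j) * ⟪Y i a, Y' j a⟫ ∂μ
        = ∑ j, (c i * c j) * ⟪∫ a, Y i a ∂μ, ∫ a, Y j a ∂μ⟫ := by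
      intro i
      rw [integral_finset_sum _ fun j _ => (aux_inner_int (hY i) (hY' j)).const_mul _]
      refine Finset.sum_congr rfl fun j _ => ?_
      rw [integral_const_mul, hEij, hmean]
    simp_rw [this]
    rw [hSint, ← real_inner_self_eq_norm_sq, sum_inner]
    refine Finset.sum_congr rfl fun i _ => ?_
    rw [inner_sum]
    refine Finset.sum_congr rfl fun j _ => ?_
    rw [real_inner_smul_left, real_inner_smul_right]
    ring
  exact ⟨aux_main μ _ _ hSmem hS'mem hE, variance_nonneg _ _⟩
end

section
/- Under the curvature condition: there exist β > 0, ν > 0, C > 0 such that I(ω) − I(ω*) ≥ C·d(ω,ω*)^β whenever d(ω,ω*) < ν, and given that h(ε_P)·sup_ω|I_P(ω) − I(ω)| → 0 for a function h with h(δ)→∞ as δ→0, and that d(ω_P, ω*) → 0, one has h(ε_P)^{1/β}·d(ω_P, ω*) → 0 as the mesh ε_P → 0. -/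
/-- Under the curvature condition `I(ω) - I(ω*) ≥ C d(ω,ω*)^β` near the unique minimizer
`ω*`, if `h(ε_P) · sup_ω |I_P(ω) - I(ω)| → 0` for a function `h` with `h(δ) → ∞` as
`δ → 0`, and `d(ω_P, ω*) → 0`, then `h(ε_P)^{1/β} · d(ω_P, ω*) → 0` as the mesh
`ε_P → 0`. -/
theorem stmt_13 {Ω ι : Type*} [MetricSpace Ω]
    (I : Ω → ℝ) (IP : ι → Ω → ℝ) (eps : ι → ℝ) (heps : ∀ i, 0 < eps i)
    (ωP : ι → Ω) (ωstar : Ω)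
    (hmin : ∀ (i : ι) (ω : Ω), IP i (ωP i) ≤ IP i ω)
    (hstar : ∀ ω : Ω, I ωstar ≤ I ω)
    (hsep : ∀ δ > (0:ℝ), ∃ η > (0:ℝ), ∀ ω : Ω, δ < dist ω ωstar → I ωstar + η ≤ I ω)
    (β ν C : ℝ) (hβ : 0 < β) (hν : 0 < ν) (hC : 0 < C)
    (hcurv : ∀ ω : Ω, dist ω ωstar < ν → C * dist ω ωstar ^ β ≤ I ω - I ωstar)
    (h : ℝ → ℝ) (hpos : ∀ x > (0:ℝ), 0 < h x)
    (hh : Filter.Tendsto h (nhdsWithin 0 (Set.Ioi 0)) Filter.atTop)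
    (hconv : ∀ ε > (0:ℝ), ∃ δ > (0:ℝ), ∀ i, eps i < δ →
      ∀ ω : Ω, h (eps i) * |IP i ω - I ω| ≤ ε)
    (hd : ∀ ε > (0:ℝ), ∃ δ > (0:ℝ), ∀ i, eps i < δ → dist (ωP i) ωstar < ε) :
    ∀ ε > (0:ℝ), ∃ δ > (0:ℝ), ∀ i, eps i < δ →
      h (eps i) ^ ((1:ℝ) / β) * dist (ωP i) ωstar ≤ ε := by
  intro ε hε
  -- choose ε' = C * ε^β / 2
  have hεβ : (0:ℝ) < ε ^ β := Real.rpow_pos_of_pos hε β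
  have hε' : (0:ℝ) < C * ε ^ β / 2 := by positivity
  obtain ⟨δ1, hδ1, H1⟩ := hconv (C * ε ^ β / 2) hε'
  obtain ⟨δ2, hδ2, H2⟩ := hd ν hν
  refine ⟨min δ1 δ2, lt_min hδ1 hδ2, fun i hi => ?_⟩
  have hi1 : eps i < δ1 := lt_of_lt_of_le hi (min_le_left _ _)
  have hi2 : eps i < δ2 := lt_of_lt_of_le hi (min_le_right _ _)
  have hdi : dist (ωP i) ωstar < ν := H2 i hi2
  have hhp : 0 < h (eps i) := hpos _ (heps i)
  -- key bound: h * (I ωP - I ωstar) ≤ C ε^β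
  have key : h (eps i) * (I (ωP i) - I ωstar) ≤ C * ε ^ β := by
    have b1 := H1 i hi1 (ωP i)
    have b2 := H1 i hi1 ωstar
    have bm : IP i (ωP i) ≤ IP i ωstar := hmin i ωstar
    have e1 : I (ωP i) - IP i (ωP i) ≤ |IP i (ωP i) - I (ωP i)| := by
      rw [abs_sub_comm]; exact le_abs_self _
    have e2 : IP i ωstar - I ωstar ≤ |IP i ωstar - I ωstar| := le_abs_self _
    nlinarith [mul_le_mul_of_nonneg_left e1 hhp.le, mul_le_mul_of_nonneg_left e2 hhp.le]
  have curv := hcurv (ωP i) hdi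
  have hd0 : (0:ℝ) ≤ dist (ωP i) ωstar := dist_nonneg
  have step : h (eps i) * dist (ωP i) ωstar ^ β ≤ ε ^ β := by
    have := mul_le_mul_of_nonneg_left curv hhp.le
    have hC2 : h (eps i) * (C * dist (ωP i) ωstar ^ β)
        = C * (h (eps i) * dist (ωP i) ωstar ^ β) := by ring
    nlinarith
  -- raise to power β
  have lhs_pow : (h (eps i) ^ ((1:ℝ)/β) * dist (ωP i) ωstar) ^ β
      = h (eps i) * dist (ωP i) ωstar ^ β := by
    rw [Real.mul_rpow (Real.rpow_nonneg hhp.le _) hd0, ← Real.rpow_mul hhp.le,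
      one_div_mul_cancel hβ.ne', Real.rpow_one]
  have lhs_nonneg : 0 ≤ h (eps i) ^ ((1:ℝ)/β) * dist (ωP i) ωstar :=
    mul_nonneg (Real.rpow_nonneg hhp.le _) hd0
  have : (h (eps i) ^ ((1:ℝ)/β) * dist (ωP i) ωstar) ^ β ≤ ε ^ β := by
    rw [lhs_pow]; exact step
  exact (Real.rpow_le_rpow_iff lhs_nonneg hε.le hβ).mp this
end

section
/- Let (Ω,d) be a bounded metric space and X an Ω-valued stochastic process on [0,1] with almost surely continuous sample paths. Suppose for each t the Fréchet mean μ(t) = argmin_ω E[d²(ω,X(t))] exists, is unique, and satisfies inf_{d(ω,μ(t))>γ} E[d²(ω,X(t))] > E[d²(μ(t),X(t))] for every γ > 0. Then the Fréchet mean function t ↦ μ(t) is continuous on [0,1]. -/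
open MeasureTheory

/-- For a bounded metric space `(Ω,d)` and an `Ω`-valued process `X` on `[0,1]` with
almost surely continuous paths, if for each `t` the Fréchet mean
`μ(t) = argmin_ω E[d²(ω,X(t))]` exists, is unique, and is a well-separated minimum, then
`t ↦ μ(t)` is continuous on `[0,1]`. -/
theorem stmt_14 {α Ω : Type*} {mα : MeasurableSpace α} (μ : Measure α) [IsProbabilityMeasure μ]
    [MetricSpace Ω] (D : ℝ) (hD : ∀ a b : Ω, dist a b ≤ D)
    (X : α → ℝ → Ω)
    (hcont : ∀ᵐ a ∂μ, ContinuousOn (X a) (Set.Icc 0 1))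
    (hmeas : ∀ t ∈ Set.Icc (0:ℝ) 1, AEStronglyMeasurable (fun a => X a t) μ)
    (μF : ℝ → Ω)
    (hmin : ∀ t ∈ Set.Icc (0:ℝ) 1, ∀ ω : Ω,
      (∫ a, (dist (μF t) (X a t)) ^ 2 ∂μ) ≤ ∫ a, (dist ω (X a t)) ^ 2 ∂μ)
    (huniq : ∀ t ∈ Set.Icc (0:ℝ) 1, ∀ ω : Ω,
      (∀ ω' : Ω, (∫ a, (dist ω (X a t)) ^ 2 ∂μ) ≤ ∫ a, (dist ω' (X a t)) ^ 2 ∂μ) → ω = μF t)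
    (hsep : ∀ t ∈ Set.Icc (0:ℝ) 1, ∀ γ > (0:ℝ), ∃ η > (0:ℝ), ∀ ω : Ω,
      γ < dist ω (μF t) →
      (∫ a, (dist (μF t) (X a t)) ^ 2 ∂μ) + η ≤ ∫ a, (dist ω (X a t)) ^ 2 ∂μ) :
    ContinuousOn μF (Set.Icc 0 1) := by
  have hD0 : 0 ≤ D := le_trans dist_nonneg (hD (μF 0) (μF 0))
  intro t ht
  have hms : ∀ s ∈ Set.Icc (0:ℝ) 1, ∀ ω : Ω,
      AEStronglyMeasurable (fun a => (dist ω (X a s))^2) μ := fun s hs ω =>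
    (aestronglyMeasurable_const.dist (hmeas s hs)).pow 2
  have hint : ∀ s ∈ Set.Icc (0:ℝ) 1, ∀ ω : Ω,
      Integrable (fun a => (dist ω (X a s))^2) μ := by
    intro s hs ω
    refine (integrable_const (D^2)).mono' (hms s hs ω) ?_
    filter_upwards with a
    rw [Real.norm_eq_abs, abs_of_nonneg (by positivity)]
    exact pow_le_pow_left₀ dist_nonneg (hD _ _) 2
  have hintd : ∀ s ∈ Set.Icc (0:ℝ) 1,
      Integrable (fun a => dist (X a s) (X a t)) μ := by
    intro s hs
    refine (integrable_const D).mono' ((hmeas s hs).dist (hmeas t ht)) ?_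
    filter_upwards with a
    rw [Real.norm_eq_abs, abs_of_nonneg dist_nonneg]
    exact hD _ _
  have key : ∀ s ∈ Set.Icc (0:ℝ) 1, ∀ ω : Ω,
      |(∫ a, (dist ω (X a s))^2 ∂μ) - ∫ a, (dist ω (X a t))^2 ∂μ|
        ≤ 2 * D * ∫ a, dist (X a s) (X a t) ∂μ := by
    intro s hs ω
    rw [← integral_sub (hint s hs ω) (hint t ht ω)]
    calc |∫ a, ((dist ω (X a s))^2 - (dist ω (X a t))^2) ∂μ|
        ≤ ∫ a, |(dist ω (X a s))^2 - (dist ω (X a t))^2| ∂μ := by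
          simpa [Real.norm_eq_abs] using
            norm_integral_le_integral_norm (fun a => (dist ω (X a s))^2 - (dist ω (X a t))^2)
      _ ≤ ∫ a, 2 * D * dist (X a s) (X a t) ∂μ := by
          refine integral_mono_of_nonneg (by filter_upwards with a; positivity)
            ((hintd s hs).const_mul _) ?_
          filter_upwards with a
          have h1 : |dist ω (X a s) - dist ω (X a t)| ≤ dist (X a s) (X a t) := by
            rw [dist_comm ω (X a s), dist_comm ω (X a t)]
            exact abs_dist_sub_le _ _ _
          have h2 : |dist ω (X a s) + dist ω (X a t)| ≤ 2 * D := by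
            rw [abs_of_nonneg (by positivity)]
            linarith [hD ω (X a s), hD ω (X a t)]
          calc |(dist ω (X a s))^2 - (dist ω (X a t))^2|
              = |dist ω (X a s) + dist ω (X a t)| * |dist ω (X a s) - dist ω (X a t)| := by
                rw [← abs_mul, ← sq_sub_sq]
            _ ≤ 2 * D * dist (X a s) (X a t) :=
                mul_le_mul h2 h1 (abs_nonneg _) (by positivity)
      _ = 2 * D * ∫ a, dist (X a s) (X a t) ∂μ := integral_const_mul _ _
  have htend : Filter.Tendsto (fun s => ∫ a, dist (X a s) (X a t) ∂μ)
      (nhdsWithin t (Set.Icc 0 1)) (nhds 0) := by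
    have h0 : Filter.Tendsto (fun s => ∫ a, dist (X a s) (X a t) ∂μ)
        (nhdsWithin t (Set.Icc 0 1)) (nhds (∫ (_ : α), (0:ℝ) ∂μ)) := by
      refine tendsto_integral_filter_of_dominated_convergence (fun _ => D)
        ?_ ?_ (integrable_const D) ?_
      · filter_upwards [self_mem_nhdsWithin] with s hs
        exact (hmeas s hs).dist (hmeas t ht)
      · filter_upwards [self_mem_nhdsWithin] with s hs
        filter_upwards with a
        rw [Real.norm_eq_abs, abs_of_nonneg dist_nonneg]
        exact hD _ _
      · filter_upwards [hcont] with a ha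
        have h1 : Filter.Tendsto (X a) (nhdsWithin t (Set.Icc 0 1)) (nhds (X a t)) :=
          (ha t ht).tendsto
        have h2 := h1.dist (tendsto_const_nhds (x := X a t))
        simpa using h2
    simpa using h0
  rw [ContinuousWithinAt, Metric.tendsto_nhds]
  intro ε hε
  obtain ⟨η, hη, hsep'⟩ := hsep t ht (ε/2) (by positivity)
  have hev : ∀ᶠ s in nhdsWithin t (Set.Icc 0 1),
      (∫ a, dist (X a s) (X a t) ∂μ) < η / (4*D+2) := by
    have hlt : (0:ℝ) < η / (4*D+2) := by positivity
    exact htend.eventually_lt_const hlt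
  filter_upwards [hev, self_mem_nhdsWithin] with s hIs hs
  by_contra hcon
  push_neg at hcon
  have hgt : ε/2 < dist (μF s) (μF t) := lt_of_lt_of_le (by linarith) hcon
  have h1 := hsep' (μF s) hgt
  have h2 := abs_le.mp (key s hs (μF s))
  have h3 := abs_le.mp (key s hs (μF t))
  have h4 := hmin s hs (μF t)
  have hI0 : (0:ℝ) ≤ ∫ a, dist (X a s) (X a t) ∂μ :=
    integral_nonneg fun a => dist_nonneg
  have h5 : (∫ a, dist (X a s) (X a t) ∂μ) * (4*D+2) < η := by
    rw [← div_mul_cancel₀ η (by positivity : (4*D+2) ≠ 0)]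
    exact mul_lt_mul_of_pos_right hIs (by positivity)
  nlinarith [h1, h2.1, h2.2, h3.1, h3.2, h4, hI0, h5, hD0]
end

section
/- Let (Ω,d_W) be the space of probability distributions on a compact interval with the 2-Wasserstein metric, S:[0,1]→Ω with continuous quantile-function representation Q(S(t)), and φ:[0,1]→ℝ continuous with ∫₀¹φ = 1. Define Q*(u) = ∫₀¹ Q(S(t))(u) φ(t) dt. Then for every ω ∈ Ω, ∫₀¹ d_W²(ω, S(t)) φ(t) dt = d_{L²}²(Q(ω), Q*) + c where c does not depend on ω; hence the generalized Fréchet integral ∫_⊕ S φ equals the distribution whose quantile function is the metric projection of Q* onto the convex set of quantile functions, and the Fréchet functional satisfies the quadratic growth I(ω) − I(∫_⊕Sφ) ≥ d_W²(ω, ∫_⊕Sφ) near the minimizer up to the projection inequality. -/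
open MeasureTheory

private lemma expand_sq (f g : ℝ → ℝ) (hf : Continuous f) (hg : Continuous g) :
    (∫ u in (0:ℝ)..1, (f u - g u) ^ 2)
      = (∫ u in (0:ℝ)..1, f u ^ 2) - 2 * (∫ u in (0:ℝ)..1, f u * g u)
        + ∫ u in (0:ℝ)..1, g u ^ 2 := by
  have I1 : IntervalIntegrable (fun u => f u ^ 2) volume 0 1 :=
    (by fun_prop : Continuous fun u => f u ^ 2).intervalIntegrable 0 1
  have I2 : IntervalIntegrable (fun u => 2 * (f u * g u)) volume 0 1 :=
    (by fun_prop : Continuous fun u => 2 * (f u * g u)).intervalIntegrable 0 1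
  have I3 : IntervalIntegrable (fun u => g u ^ 2) volume 0 1 :=
    (by fun_prop : Continuous fun u => g u ^ 2).intervalIntegrable 0 1
  rw [intervalIntegral.integral_congr
      (g := fun u => f u ^ 2 - 2 * (f u * g u) + g u ^ 2) (fun u _ => by ring),
    intervalIntegral.integral_add (I1.sub I2) I3, intervalIntegral.integral_sub I1 I2,
    intervalIntegral.integral_const_mul]

private lemma expand_three (a b q : ℝ → ℝ) (ha : Continuous a) (hb : Continuous b)
    (hq : Continuous q) :
    (∫ u in (0:ℝ)..1, (a u - q u) ^ 2)
      = (∫ u in (0:ℝ)..1, (a u - b u) ^ 2)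
        - 2 * (∫ u in (0:ℝ)..1, (q u - b u) * (a u - b u))
        + ∫ u in (0:ℝ)..1, (b u - q u) ^ 2 := by
  have I1 : IntervalIntegrable (fun u => (a u - b u) ^ 2) volume 0 1 :=
    (by fun_prop : Continuous fun u => (a u - b u) ^ 2).intervalIntegrable 0 1
  have I2 : IntervalIntegrable (fun u => 2 * ((q u - b u) * (a u - b u))) volume 0 1 :=
    (by fun_prop : Continuous fun u => 2 * ((q u - b u) * (a u - b u))).intervalIntegrable 0 1
  have I3 : IntervalIntegrable (fun u => (b u - q u) ^ 2) volume 0 1 :=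
    (by fun_prop : Continuous fun u => (b u - q u) ^ 2).intervalIntegrable 0 1
  rw [intervalIntegral.integral_congr
      (g := fun u => (a u - b u) ^ 2 - 2 * ((q u - b u) * (a u - b u)) + (b u - q u) ^ 2)
      (fun u _ => by ring),
    intervalIntegral.integral_add (I1.sub I2) I3, intervalIntegral.integral_sub I1 I2,
    intervalIntegral.integral_const_mul]

/-- For the space of distributions on a compact interval with the 2-Wasserstein metric,
represented through quantile functions `Q`, with `S : [0,1] → Ω` and `φ` continuous with
`∫₀¹ φ = 1`, and `Q*(u) = ∫₀¹ Q(S(t))(u) φ(t) dt`: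
(i) `∫₀¹ d_W²(ω,S(t)) φ(t) dt = ‖Q(ω) - Q*‖²_{L²} + c` with `c` not depending on `ω`;
(ii) hence, whenever `ω*` satisfies the projection inequality
`⟨Q* - Q(ω*), Q(ω) - Q(ω*)⟩ ≤ 0` for all `ω`, it is the generalized Fréchet integral,
with quadratic growth `I(ω) - I(ω*) ≥ d_W²(ω, ω*)`. -/
theorem stmt_19 {Ω : Type*} (Q : Ω → ℝ → ℝ) (S : ℝ → Ω) (φ : ℝ → ℝ)
    (hQcont : ∀ ω : Ω, ContinuousOn (Q ω) (Set.Icc 0 1))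
    (hScont : ContinuousOn (fun p : ℝ × ℝ => Q (S p.1) p.2)
      (Set.Icc 0 1 ×ˢ Set.Icc 0 1))
    (hφ : ContinuousOn φ (Set.Icc 0 1))
    (hφ1 : (∫ t in (0:ℝ)..1, φ t) = 1) :
    ∃ c : ℝ,
      (∀ ω : Ω,
        (∫ t in (0:ℝ)..1, (∫ u in (0:ℝ)..1, (Q ω u - Q (S t) u) ^ 2) * φ t)
          = (∫ u in (0:ℝ)..1, (Q ω u - ∫ t in (0:ℝ)..1, Q (S t) u * φ t) ^ 2) + c) ∧
      ∀ ωstar : Ω,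
        (∀ ω : Ω, (∫ u in (0:ℝ)..1,
            ((∫ t in (0:ℝ)..1, Q (S t) u * φ t) - Q ωstar u) * (Q ω u - Q ωstar u)) ≤ 0) →
        ((∀ ω : Ω,
          (∫ t in (0:ℝ)..1, (∫ u in (0:ℝ)..1, (Q ωstar u - Q (S t) u) ^ 2) * φ t)
            ≤ ∫ t in (0:ℝ)..1, (∫ u in (0:ℝ)..1, (Q ω u - Q (S t) u) ^ 2) * φ t) ∧
         ∀ ω : Ω,
          (∫ t in (0:ℝ)..1, (∫ u in (0:ℝ)..1, (Q ωstar u - Q (S t) u) ^ 2) * φ t)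
              + (∫ u in (0:ℝ)..1, (Q ω u - Q ωstar u) ^ 2)
            ≤ ∫ t in (0:ℝ)..1, (∫ u in (0:ℝ)..1, (Q ω u - Q (S t) u) ^ 2) * φ t) := by
  -- retraction onto [0,1]
  set π : ℝ → ℝ := fun x => max 0 (min 1 x) with hπdef
  have hπc : Continuous π := by fun_prop
  have hπmem : ∀ x, π x ∈ Set.Icc (0:ℝ) 1 := by
    intro x
    refine ⟨le_max_left _ _, max_le zero_le_one (min_le_left _ _)⟩
  have hπid : ∀ x ∈ Set.Icc (0:ℝ) 1, π x = x := by
    intro x hx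
    simp [hπdef, min_eq_right hx.2, max_eq_right hx.1]
  have huIcc : Set.uIcc (0:ℝ) 1 = Set.Icc 0 1 := Set.uIcc_of_le zero_le_one
  -- globally continuous versions
  set G : ℝ → ℝ → ℝ := fun t u => Q (S (π t)) (π u) with hGdef
  have hG : Continuous (Function.uncurry G) := by
    have : Function.uncurry G = (fun p : ℝ × ℝ => Q (S p.1) p.2) ∘ fun p : ℝ × ℝ => (π p.1, π p.2) := rfl
    rw [this]
    exact hScont.comp_continuous (by fun_prop) fun p => ⟨hπmem _, hπmem _⟩
  have hGt : ∀ t, Continuous fun u => G t u := fun t =>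
    hG.comp (Continuous.prodMk_right t)
  set F : Ω → ℝ → ℝ := fun ω u => Q ω (π u) with hFdef
  have hF : ∀ ω, Continuous (F ω) := fun ω =>
    (hQcont ω).comp_continuous hπc fun u => hπmem u
  set Φ : ℝ → ℝ := fun t => φ (π t) with hΦdef
  have hΦ : Continuous Φ := hφ.comp_continuous hπc fun t => hπmem t
  set Qs : ℝ → ℝ := fun u => ∫ t in (0:ℝ)..1, G t u * Φ t with hQsdef
  have hQs : Continuous Qs := by
    refine intervalIntegral.continuous_parametric_intervalIntegral_of_continuous'
      (f := fun u t => G t u * Φ t) ?_ 0 1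
    fun_prop
  -- congruences between statement form and retracted form
  have hΦ1 : (∫ t in (0:ℝ)..1, Φ t) = 1 := by
    have hΦφ : (∫ t in (0:ℝ)..1, Φ t) = ∫ t in (0:ℝ)..1, φ t := by
      refine intervalIntegral.integral_congr (f := Φ) (g := φ) fun t ht => ?_
      rw [huIcc] at ht
      simp only [hΦdef]
      rw [hπid t ht]
    rw [hΦφ, hφ1]
  have hQseq : ∀ u ∈ Set.Icc (0:ℝ) 1, (∫ t in (0:ℝ)..1, Q (S t) u * φ t) = Qs u := by
    intro u hu
    refine intervalIntegral.integral_congr (g := fun t => G t u * Φ t) fun t ht => ?_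
    rw [huIcc] at ht
    simp only [hGdef, hΦdef]
    rw [hπid t ht, hπid u hu]
  have hJ : ∀ ω : Ω,
      (∫ t in (0:ℝ)..1, (∫ u in (0:ℝ)..1, (Q ω u - Q (S t) u) ^ 2) * φ t)
        = ∫ t in (0:ℝ)..1, (∫ u in (0:ℝ)..1, (F ω u - G t u) ^ 2) * Φ t := by
    intro ω
    refine intervalIntegral.integral_congr fun t ht => ?_
    rw [huIcc] at ht
    have hin : (∫ u in (0:ℝ)..1, (Q ω u - Q (S t) u) ^ 2)
        = ∫ u in (0:ℝ)..1, (F ω u - G t u) ^ 2 := by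
      refine intervalIntegral.integral_congr fun u hu => ?_
      rw [huIcc] at hu
      simp [hFdef, hGdef, hπid t ht, hπid u hu]
    rw [hin]; simp [hΦdef, hπid t ht]
  -- Fubini : middle term
  have hmid : ∀ ω : Ω,
      (∫ t in (0:ℝ)..1, (∫ u in (0:ℝ)..1, F ω u * G t u) * Φ t)
        = ∫ u in (0:ℝ)..1, F ω u * Qs u := by
    intro ω
    have h1 : (∫ t in (0:ℝ)..1, (∫ u in (0:ℝ)..1, F ω u * G t u) * Φ t)
        = ∫ t in (0:ℝ)..1, ∫ u in (0:ℝ)..1, F ω u * G t u * Φ t := by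
      refine intervalIntegral.integral_congr fun t ht => ?_
      rw [← intervalIntegral.integral_mul_const]
    have h2 : (∫ u in (0:ℝ)..1, F ω u * Qs u)
        = ∫ u in (0:ℝ)..1, ∫ t in (0:ℝ)..1, F ω u * G t u * Φ t := by
      refine intervalIntegral.integral_congr fun u hu => ?_
      simp only [hQsdef]
      rw [← intervalIntegral.integral_const_mul]
      congr 1; ext t; ring
    rw [h1, h2]
    have hcont : Continuous (Function.uncurry fun t u => F ω u * G t u * Φ t) := by
      fun_prop
    have hInt : Integrable (Function.uncurry fun t u => F ω u * G t u * Φ t)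
        ((volume.restrict (Set.Ioc (0:ℝ) 1)).prod (volume.restrict (Set.Ioc (0:ℝ) 1))) := by
      rw [Measure.prod_restrict]
      exact ((hcont.continuousOn.integrableOn_compact
        (isCompact_Icc.prod isCompact_Icc)).mono_set
        (Set.prod_mono Set.Ioc_subset_Icc_self Set.Ioc_subset_Icc_self))
    rw [intervalIntegral.integral_of_le zero_le_one,
      intervalIntegral.integral_of_le zero_le_one]
    simp only [intervalIntegral.integral_of_le zero_le_one]
    exact integral_integral_swap hInt
  -- the constant
  set C : ℝ := ∫ t in (0:ℝ)..1, (∫ u in (0:ℝ)..1, (G t u) ^ 2) * Φ t with hCdef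
  set c : ℝ := C - ∫ u in (0:ℝ)..1, (Qs u) ^ 2 with hcdef
  -- main expansion identity, in retracted form
  have expand : ∀ ω : Ω,
      (∫ t in (0:ℝ)..1, (∫ u in (0:ℝ)..1, (F ω u - G t u) ^ 2) * Φ t)
        = (∫ u in (0:ℝ)..1, (F ω u - Qs u) ^ 2) + c := by
    intro ω
    have hstep : ∀ t, (∫ u in (0:ℝ)..1, (F ω u - G t u) ^ 2) * Φ t
        = (∫ u in (0:ℝ)..1, F ω u ^ 2) * Φ t
          - 2 * ((∫ u in (0:ℝ)..1, F ω u * G t u) * Φ t)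
          + (∫ u in (0:ℝ)..1, G t u ^ 2) * Φ t := by
      intro t
      rw [expand_sq _ _ (hF ω) (hGt t)]; ring
    have IA : IntervalIntegrable (fun t => (∫ u in (0:ℝ)..1, F ω u ^ 2) * Φ t) volume 0 1 :=
      (by fun_prop : Continuous fun t => (∫ u in (0:ℝ)..1, F ω u ^ 2) * Φ t).intervalIntegrable 0 1
    have hBc : Continuous fun t => (∫ u in (0:ℝ)..1, F ω u * G t u) :=
      intervalIntegral.continuous_parametric_intervalIntegral_of_continuous'
        (f := fun t u => F ω u * G t u) (by fun_prop) 0 1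
    have hCc : Continuous fun t => (∫ u in (0:ℝ)..1, G t u ^ 2) :=
      intervalIntegral.continuous_parametric_intervalIntegral_of_continuous'
        (f := fun t u => G t u ^ 2) (by fun_prop) 0 1
    have IB : IntervalIntegrable
        (fun t => 2 * ((∫ u in (0:ℝ)..1, F ω u * G t u) * Φ t)) volume 0 1 :=
      (by fun_prop : Continuous fun t =>
        2 * ((∫ u in (0:ℝ)..1, F ω u * G t u) * Φ t)).intervalIntegrable 0 1
    have IC : IntervalIntegrable (fun t => (∫ u in (0:ℝ)..1, G t u ^ 2) * Φ t) volume 0 1 :=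
      (by fun_prop : Continuous fun t => (∫ u in (0:ℝ)..1, G t u ^ 2) * Φ t).intervalIntegrable 0 1
    calc (∫ t in (0:ℝ)..1, (∫ u in (0:ℝ)..1, (F ω u - G t u) ^ 2) * Φ t)
        = ∫ t in (0:ℝ)..1, ((∫ u in (0:ℝ)..1, F ω u ^ 2) * Φ t
            - 2 * ((∫ u in (0:ℝ)..1, F ω u * G t u) * Φ t)
            + (∫ u in (0:ℝ)..1, G t u ^ 2) * Φ t) := by
          exact intervalIntegral.integral_congr fun t _ => hstep t
      _ = (∫ t in (0:ℝ)..1, (∫ u in (0:ℝ)..1, F ω u ^ 2) * Φ t)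
            - (∫ t in (0:ℝ)..1, 2 * ((∫ u in (0:ℝ)..1, F ω u * G t u) * Φ t)) + C := by
          rw [intervalIntegral.integral_add (IA.sub IB) IC,
            intervalIntegral.integral_sub IA IB]
      _ = (∫ u in (0:ℝ)..1, F ω u ^ 2)
            - 2 * (∫ u in (0:ℝ)..1, F ω u * Qs u) + C := by
          rw [intervalIntegral.integral_const_mul, hΦ1, mul_one,
            intervalIntegral.integral_const_mul, hmid ω]
      _ = (∫ u in (0:ℝ)..1, (F ω u - Qs u) ^ 2) + c := by
          rw [expand_sq _ _ (hF ω) hQs, hcdef]; ring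
  refine ⟨c, ?_, ?_⟩
  · intro ω
    have hR : (∫ u in (0:ℝ)..1, (Q ω u - ∫ t in (0:ℝ)..1, Q (S t) u * φ t) ^ 2)
        = ∫ u in (0:ℝ)..1, (F ω u - Qs u) ^ 2 := by
      refine intervalIntegral.integral_congr fun u hu => ?_
      rw [huIcc] at hu
      rw [hQseq u hu]
      simp [hFdef, hπid u hu]
    rw [hJ ω, expand ω, hR]
  · intro ωstar hproj
    have hproj' : ∀ ω : Ω,
        (∫ u in (0:ℝ)..1, (Qs u - F ωstar u) * (F ω u - F ωstar u)) ≤ 0 := by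
      intro ω
      have := hproj ω
      have heq : (∫ u in (0:ℝ)..1,
          ((∫ t in (0:ℝ)..1, Q (S t) u * φ t) - Q ωstar u) * (Q ω u - Q ωstar u))
          = ∫ u in (0:ℝ)..1, (Qs u - F ωstar u) * (F ω u - F ωstar u) := by
        refine intervalIntegral.integral_congr fun u hu => ?_
        rw [huIcc] at hu
        rw [hQseq u hu]
        simp [hFdef, hπid u hu]
      linarith [heq ▸ this]
    have main : ∀ ω : Ω,
        (∫ t in (0:ℝ)..1, (∫ u in (0:ℝ)..1, (Q ωstar u - Q (S t) u) ^ 2) * φ t)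
            + (∫ u in (0:ℝ)..1, (Q ω u - Q ωstar u) ^ 2)
          ≤ ∫ t in (0:ℝ)..1, (∫ u in (0:ℝ)..1, (Q ω u - Q (S t) u) ^ 2) * φ t := by
      intro ω
      have hsq : (∫ u in (0:ℝ)..1, (Q ω u - Q ωstar u) ^ 2)
          = ∫ u in (0:ℝ)..1, (F ω u - F ωstar u) ^ 2 := by
        refine intervalIntegral.integral_congr fun u hu => ?_
        rw [huIcc] at hu
        simp [hFdef, hπid u hu]
      rw [hJ ω, hJ ωstar, expand ω, expand ωstar, hsq]
      have hid := expand_three (F ω) (F ωstar) Qs (hF ω) (hF ωstar) hQs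
      have h3 := hproj' ω
      linarith [hid, h3]
    refine ⟨fun ω => ?_, main⟩
    have hnn : (0:ℝ) ≤ ∫ u in (0:ℝ)..1, (Q ω u - Q ωstar u) ^ 2 :=
      intervalIntegral.integral_nonneg zero_le_one fun u _ => sq_nonneg _
    linarith [main ω]
end
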